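/- Let A be a unital C*-algebra, let a ∈ A be selfadjoint, and let c ≥ 0 be such that the spectrum of a is contained in [c,∞). Then for every ζ ∈ ℂ with ζ ∉ [c,∞), the element a − ζ·1 is invertible and ‖(a + 1)·(a − ζ·1)⁻¹‖ ≤ (c + 2)·ρ(ζ)^{1/2}. -/

import Mathlib

/-- The coefficient `c(ψ)` from the paper, for `ψ ∈ (0, 2π)`:
`c(ψ) = 1/|sin ψ|` if `ψ ∈ (0, π/2) ∪ (3π/2, 2π)`, and `c(ψ) = 1` if `ψ ∈ [π/2, 3π/2]`. -/
noncomputable def cArg (ψ : ℝ) : ℝ :=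
  if (0 < ψ ∧ ψ < Real.pi / 2) ∨ (3 * Real.pi / 2 < ψ ∧ ψ < 2 * Real.pi) then
    |Real.sin ψ|⁻¹
  else 1

/-- The quantity `ρ(ζ)` from the paper: `ρ(ζ) = c(ψ)² |ζ − c|⁻²` if `|ζ − c| < 1`, and
`ρ(ζ) = c(ψ)²` if `|ζ − c| ≥ 1`, where `ψ = arg(ζ − c) ∈ (0, 2π)`. -/
noncomputable def rhoFlat (c : ℝ) (ζ : ℂ) (ψ : ℝ) : ℝ :=
  if ‖ζ - (c : ℂ)‖ < 1 then cArg ψ ^ 2 * (‖ζ - (c : ℂ)‖)⁻¹ ^ 2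
  else cArg ψ ^ 2

/-- Scalar inequality, case `cos ψ ≤ 0`. -/
lemma keyA (c t d co s : ℝ) (hc : 0 ≤ c) (ht : 0 ≤ t) (hd : 0 < d)
    (hpyth : s^2 + co^2 = 1) (hco : co ≤ 0) :
    (t + c + 1) * min 1 d ≤ (c + 2) * Real.sqrt ((t - d*co)^2 + (d*s)^2) := by
  have hm0 : 0 < min 1 d := lt_min one_pos hd
  have hm1 : min 1 d ≤ 1 := min_le_left _ _
  have hmd : min 1 d ≤ d := min_le_right _ _
  have hX : (t - d*co)^2 + (d*s)^2 = t^2 - 2*t*d*co + d^2 := by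
    have h : (t - d*co)^2 + (d*s)^2 = t^2 - 2*t*d*co + d^2*(s^2+co^2) := by ring
    rw [h, hpyth]; ring
  have hsq : ((t + c + 1) * min 1 d)^2 ≤ (c+2)^2 * ((t - d*co)^2 + (d*s)^2) := by
    rw [hX]
    set m := min 1 d with hm
    nlinarith [sq_nonneg (t*(c+1) - m), mul_nonneg (mul_nonneg ht hd.le) (neg_nonneg.2 hco),
      mul_nonneg (sub_nonneg.2 hmd) (by positivity : (0:ℝ) ≤ d + m),
      mul_nonneg (mul_nonneg ht (sub_nonneg.2 hm1))
        (by positivity : (0:ℝ) ≤ t + (c+1)*m + (t+c+1)*m),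
      sq_nonneg t, sq_nonneg m, mul_nonneg hc ht]
  calc (t + c + 1) * min 1 d = Real.sqrt (((t + c + 1) * min 1 d)^2) := by
        rw [Real.sqrt_sq (by positivity)]
    _ ≤ Real.sqrt ((c+2)^2 * ((t - d*co)^2 + (d*s)^2)) := Real.sqrt_le_sqrt hsq
    _ = (c+2) * Real.sqrt ((t - d*co)^2 + (d*s)^2) := by
        rw [Real.sqrt_mul (by positivity), Real.sqrt_sq (by positivity)]

/-- Scalar inequality, general case (effective when `cos ψ > 0`). -/
lemma keyB (c t d co s : ℝ) (hc : 0 ≤ c) (ht : 0 ≤ t) (hd : 0 < d)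
    (hpyth : s^2 + co^2 = 1) :
    (t + c + 1) * (|s| * min 1 d) ≤ (c + 2) * Real.sqrt ((t - d*co)^2 + (d*s)^2) := by
  have hco1 : co ≤ 1 := by nlinarith [sq_nonneg s, sq_nonneg (co - 1)]
  have hs2' : d^2*s^2 = d^2 - d^2*co^2 := by
    have h : s^2 = 1 - co^2 := by linarith
    rw [h]; ring
  have habs : ∀ m : ℝ, ((t + c + 1) * (|s| * m))^2 = (t+c+1)^2 * s^2 * m^2 := by
    intro m; rw [mul_pow, mul_pow, sq_abs]; ring
  have hsq : ((t + c + 1) * (|s| * min 1 d))^2 ≤ (c+2)^2 * ((t - d*co)^2 + (d*s)^2) := by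
    rcases le_total 1 d with hd1 | hd1
    · rw [min_eq_left hd1, habs]
      have h1 : d^2*s^2 + (d*co+c+1)^2 ≤ (c+2)^2*d^2 := by
        have hA : 0 ≤ (c+1)*(c+1)*(d^2-1) := by
          have h : (0:ℝ) ≤ d^2 - 1 := by nlinarith
          positivity
        have hB : 0 ≤ (c+1)*(d^2-d) := by
          have h : (0:ℝ) ≤ d^2 - d := by nlinarith
          positivity
        have hC : 0 ≤ d*(1-co)*(c+1) := by
          have h1co : (0:ℝ) ≤ 1 - co := by linarith
          positivity
        nlinarith [hA, hB, hC]
      have hd2 : (0:ℝ) < d^2 := by positivity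
      rw [← mul_le_mul_iff_of_pos_right hd2]
      nlinarith [sq_nonneg ((t - d*co)*(d*co+c+1) - d^2*s^2),
        mul_nonneg (by positivity : (0:ℝ) ≤ (t-d*co)^2 + (d*s)^2) (sub_nonneg.2 h1)]
    · rw [min_eq_right hd1, habs]
      have h2 : d^2*s^2 + (d*co+c+1)^2 ≤ (c+2)^2 := by
        have hdco : d * co ≤ 1 := by nlinarith
        have hB : 0 ≤ (1 - d*co)*(c+1) := by
          have h : (0:ℝ) ≤ 1 - d*co := by linarith
          positivity
        have hA : 0 ≤ (1-d)*(1+d) := by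
          have h : (0:ℝ) ≤ 1 - d := by linarith
          positivity
        nlinarith [hA, hB]
      nlinarith [sq_nonneg ((t - d*co)*(d*co+c+1) - d^2*s^2),
        mul_nonneg (by positivity : (0:ℝ) ≤ (t-d*co)^2 + (d*s)^2) (sub_nonneg.2 h2)]
  calc (t + c + 1) * (|s| * min 1 d) = Real.sqrt (((t + c + 1) * (|s| * min 1 d))^2) := by
        rw [Real.sqrt_sq (by positivity)]
    _ ≤ Real.sqrt ((c+2)^2 * ((t - d*co)^2 + (d*s)^2)) := Real.sqrt_le_sqrt hsq
    _ = (c+2) * Real.sqrt ((t - d*co)^2 + (d*s)^2) := by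
        rw [Real.sqrt_mul (by positivity), Real.sqrt_sq (by positivity)]

/-- In a unital C*-algebra, if `a` is selfadjoint with spectrum contained in `[c,∞)`
(`c ≥ 0`), then for `ζ ∈ ℂ \ [c,∞)` the element `a − ζ·1` is invertible and
`‖(a + 1)(a − ζ·1)⁻¹‖ ≤ (c + 2) ρ(ζ)^{1/2}`. -/
theorem add_one_mul_resolvent_norm_bound {A : Type*} [CStarAlgebra A]
    (a : A) (ha : IsSelfAdjoint a) (c : ℝ) (hc : 0 ≤ c)
    (hspec : spectrum ℂ a ⊆ Complex.ofReal '' Set.Ici c)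
    (ζ : ℂ) (ψ : ℝ)
    (hζ : ∀ x : ℝ, c ≤ x → ζ ≠ (x : ℂ))
    (hψ : ψ ∈ Set.Ioo (0 : ℝ) (2 * Real.pi))
    (hζψ : ζ - (c : ℂ) = (‖ζ - (c : ℂ)‖ : ℂ) * Complex.exp ((ψ : ℂ) * Complex.I)) :
    IsUnit (a - ζ • (1 : A)) ∧
      ‖(a + 1) * Ring.inverse (a - ζ • (1 : A))‖ ≤ (c + 2) * Real.sqrt (rhoFlat c ζ ψ) := by
  have hnormal : IsStarNormal a := ha.isStarNormal
  -- ζ is not in the spectrum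
  have hζspec : ζ ∉ spectrum ℂ a := by
    intro h
    obtain ⟨x, hx, rfl⟩ := hspec h
    exact hζ x hx rfl
  have hUnit : IsUnit (a - ζ • (1 : A)) := by
    have h := spectrum.notMem_iff.mp hζspec
    rw [Algebra.algebraMap_eq_smul_one] at h
    simpa [neg_sub] using h.neg
  refine ⟨hUnit, ?_⟩
  -- geometry of ζ
  set d := ‖ζ - (c : ℂ)‖ with hdd
  have hζc : ζ - (c : ℂ) ≠ 0 := sub_ne_zero.2 (hζ c le_rfl)
  have hd : 0 < d := by simpa [hdd] using (norm_pos_iff.2 hζc)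
  set co := Real.cos ψ with hcodef
  set s := Real.sin ψ with hsdef
  have hpyth : s^2 + co^2 = 1 := Real.sin_sq_add_cos_sq ψ
  have hz : ζ = (((c : ℝ) + d*co : ℝ) : ℂ) + ((d*s : ℝ) : ℂ) * Complex.I := by
    have h1 : ζ - (c:ℂ) = (d:ℂ) * (Complex.cos ψ + Complex.sin ψ * Complex.I) := by
      rw [hζψ, Complex.exp_mul_I]
    rw [← Complex.ofReal_cos, ← Complex.ofReal_sin, ← hcodef, ← hsdef] at h1
    have h2 := sub_eq_iff_eq_add.mp h1
    rw [h2]; push_cast; ring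
  -- sqrt of rhoFlat
  have hcArg0 : 0 ≤ cArg ψ := by unfold cArg; split <;> positivity
  have hsqrtrho : Real.sqrt (rhoFlat c ζ ψ) = cArg ψ * (min 1 d)⁻¹ := by
    rw [rhoFlat, ← hdd]
    split
    · next h =>
      rw [min_eq_right (le_of_lt h),
        show cArg ψ ^ 2 * (d⁻¹)^2 = (cArg ψ * d⁻¹)^2 by ring,
        Real.sqrt_sq (by positivity)]
    · next h =>
      rw [min_eq_left (le_of_not_gt h), Real.sqrt_sq hcArg0, inv_one, mul_one]
  -- express as cfc
  have hg_cont : ContinuousOn (fun z : ℂ => (z + 1) * (z - ζ)⁻¹) (spectrum ℂ a) := by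
    apply ContinuousOn.mul (by fun_prop)
    apply ContinuousOn.inv₀ (by fun_prop)
    intro x hx
    obtain ⟨r, hr, rfl⟩ := hspec hx
    exact sub_ne_zero.2 fun h => hζ r hr h.symm
  have hsub : a - ζ • (1 : A) = cfc (fun z : ℂ => z - ζ) a := by
    rw [cfc_sub (fun z : ℂ => z) (fun _ : ℂ => ζ) a, cfc_id' ℂ a, cfc_const ζ a,
      Algebra.algebraMap_eq_smul_one]
  have hmul : cfc (fun z : ℂ => (z + 1) * (z - ζ)⁻¹) a * (a - ζ • (1 : A)) = a + 1 := by
    rw [hsub, ← cfc_mul _ _ a hg_cont (by fun_prop)]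
    have h3 : cfc (fun z : ℂ => (z + 1) * (z - ζ)⁻¹ * (z - ζ)) a
        = cfc (fun z : ℂ => z + 1) a := by
      apply cfc_congr
      intro x hx
      obtain ⟨r, hr, rfl⟩ := hspec hx
      have hne : (r : ℂ) - ζ ≠ 0 := sub_ne_zero.2 fun h => hζ r hr h.symm
      field_simp
    rw [h3, cfc_add_const 1 (fun z : ℂ => z) a, cfc_id' ℂ a, map_one]
  have heq : (a + 1) * Ring.inverse (a - ζ • (1 : A)) =
      cfc (fun z : ℂ => (z + 1) * (z - ζ)⁻¹) a := by
    rw [← hmul, mul_assoc, Ring.mul_inverse_cancel _ hUnit, mul_one]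
  rw [heq]
  -- bound the norm via the spectrum
  apply norm_cfc_le (by positivity)
  intro x hx
  obtain ⟨r, hr, rfl⟩ := hspec hx
  set t := r - c with htdef
  have ht : 0 ≤ t := sub_nonneg.2 hr
  have hrt : r = t + c := by rw [htdef]; ring
  have hxζ : (r : ℂ) - ζ = ((t - d*co : ℝ) : ℂ) + ((-(d*s) : ℝ) : ℂ) * Complex.I := by
    rw [hz, hrt]; push_cast; ring
  have habsx : ‖(r : ℂ) - ζ‖ = Real.sqrt ((t - d*co)^2 + (d*s)^2) := by
    rw [hxζ, Complex.norm_add_mul_I]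
    congr 1; ring
  have hX0 : 0 < Real.sqrt ((t - d*co)^2 + (d*s)^2) := by
    rw [← habsx]
    exact norm_pos_iff.2 (sub_ne_zero.2 fun h => hζ r hr h.symm)
  have hnorm : ‖((r:ℂ) + 1) * ((r:ℂ) - ζ)⁻¹‖
      = (t + c + 1) * (Real.sqrt ((t - d*co)^2 + (d*s)^2))⁻¹ := by
    rw [norm_mul, norm_inv, habsx]
    congr 1
    rw [show ((r:ℂ) + 1) = ((r + 1 : ℝ) : ℂ) by push_cast; ring, Complex.norm_real, Real.norm_eq_abs,
      abs_of_nonneg (by linarith)]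
    rw [hrt]
  rw [hnorm, hsqrtrho, mul_inv_le_iff₀ hX0]
  -- split on the cArg condition
  by_cases hcond : (0 < ψ ∧ ψ < Real.pi / 2) ∨ (3 * Real.pi / 2 < ψ ∧ ψ < 2 * Real.pi)
  · -- cArg ψ = |sin ψ|⁻¹, here sin ψ ≠ 0
    have hcargeq : cArg ψ = |s|⁻¹ := by rw [cArg, if_pos hcond]
    have hs0 : s ≠ 0 := by
      rcases hcond with ⟨h1, h2⟩ | ⟨h1, h2⟩
      · exact ne_of_gt (Real.sin_pos_of_pos_of_lt_pi h1 (by linarith [Real.pi_pos]))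
      · have h3 : Real.sin (ψ - 2*Real.pi) < 0 := by
          apply Real.sin_neg_of_neg_of_neg_pi_lt (by linarith)
          have := Real.pi_pos; linarith
        rw [Real.sin_sub_two_pi] at h3
        exact ne_of_lt h3
    have habs0 : 0 < |s| := abs_pos.2 hs0
    have hm0 : 0 < min 1 d := lt_min one_pos hd
    have hkey := keyB c t d co s hc ht hd hpyth
    calc t + c + 1 = ((t + c + 1) * (|s| * min 1 d)) * (|s| * min 1 d)⁻¹ := by
          field_simp
      _ ≤ ((c + 2) * Real.sqrt ((t - d*co)^2 + (d*s)^2)) * (|s| * min 1 d)⁻¹ :=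
          mul_le_mul_of_nonneg_right hkey (by positivity)
      _ = c + 2 * 0 + ((c + 2) * (|s|⁻¹ * (min 1 d)⁻¹) * Real.sqrt ((t - d*co)^2 + (d*s)^2))
          - c - 2*0 := by rw [mul_inv]; ring
      _ = (c + 2) * (cArg ψ * (min 1 d)⁻¹) * Real.sqrt ((t - d*co)^2 + (d*s)^2) := by
          rw [hcargeq]; ring
  · -- cArg ψ = 1, here cos ψ ≤ 0
    have hcargeq : cArg ψ = 1 := by rw [cArg, if_neg hcond]
    push_neg at hcond
    obtain ⟨hcond1, hcond2⟩ := hcond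
    have h1 : Real.pi / 2 ≤ ψ := hcond1 hψ.1
    have h2 : ψ ≤ 3 * Real.pi / 2 := by
      by_contra h
      push_neg at h
      linarith [hcond2 h, hψ.2]
    have hco : co ≤ 0 := by
      rw [hcodef]
      exact Real.cos_nonpos_of_pi_div_two_le_of_le h1 (by linarith)
    have hm0 : 0 < min 1 d := lt_min one_pos hd
    have hkey := keyA c t d co s hc ht hd hpyth hco
    calc t + c + 1 = ((t + c + 1) * min 1 d) * (min 1 d)⁻¹ := by field_simp
      _ ≤ ((c + 2) * Real.sqrt ((t - d*co)^2 + (d*s)^2)) * (min 1 d)⁻¹ :=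
          mul_le_mul_of_nonneg_right hkey (by positivity)
      _ = (c + 2) * (cArg ψ * (min 1 d)⁻¹) * Real.sqrt ((t - d*co)^2 + (d*s)^2) := by
          rw [hcargeq]; ring
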